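/- Let φ be a strongly monotone continuous semiflow on a metric space X with closed partial order ≤ and open strict relation ≪ ⊆ ≤, with all orbits having compact closure. Then no omega-limit set ω(z) contains two distinct points x, y with x ≤ y. -/

import Mathlib

open Filter Topology

/-- Nonordering of omega-limit sets: no omega-limit set of a strongly monotone
semiflow with precompact orbits contains two distinct ordered points. -/
theorem omega_limit_nonordered {X : Type*} [MetricSpace X] [PartialOrder X]
    (lt : X → X → Prop)
    (hclosed : IsClosed {q : X × X | q.1 ≤ q.2})
    (hlt_le : ∀ a b, lt a b → a ≤ b)
    (hlt_ne : ∀ a b, lt a b → a ≠ b)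
    (hopen : ∀ a b, lt a b → ∃ U V : Set X, IsOpen U ∧ IsOpen V ∧ a ∈ U ∧ b ∈ V ∧
      ∀ u ∈ U, ∀ v ∈ V, lt u v)
    (φ : ℝ → X → X)
    (hφc : Continuous fun q : ℝ × X => φ q.1 q.2)
    (hφ0 : ∀ x, φ 0 x = x)
    (hφadd : ∀ s t : ℝ, 0 ≤ s → 0 ≤ t → ∀ x, φ (s + t) x = φ s (φ t x))
    (hmono : ∀ x y : X, x ≤ y → x ≠ y → ∀ t : ℝ, 0 < t → lt (φ t x) (φ t y))
    (hcompact : ∀ z : X, IsCompact (closure {w | ∃ t : ℝ, 0 ≤ t ∧ φ t z = w}))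
    (z x y : X)
    (hx : x ∈ ⋂ (s : ℝ) (_ : 0 ≤ s), closure {w | ∃ t : ℝ, s ≤ t ∧ φ t z = w})
    (hy : y ∈ ⋂ (s : ℝ) (_ : 0 ≤ s), closure {w | ∃ t : ℝ, s ≤ t ∧ φ t z = w})
    (hne : x ≠ y) :
    ¬ x ≤ y := by
  intro hle
  have hxy' : lt (φ 1 x) (φ 1 y) := hmono x y hle hne 1 one_pos
  obtain ⟨U, V, hU, hV, hxU, hyV, hUV⟩ := hopen _ _ hxy'
  have hcont : Continuous fun t : ℝ => φ t z :=
    hφc.comp (continuous_id.prodMk continuous_const)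
  have hφ1 : Continuous fun w : X => φ 1 w :=
    hφc.comp (continuous_const.prodMk continuous_id)
  -- the orbit enters U (resp. V) at arbitrarily large times
  have hvisit : ∀ (p : X) (W : Set X), IsOpen W → φ 1 p ∈ W →
      p ∈ ⋂ (s : ℝ) (_ : 0 ≤ s), closure {w | ∃ t : ℝ, s ≤ t ∧ φ t z = w} →
      ∀ s : ℝ, 0 ≤ s → ∃ t, s ≤ t ∧ 0 ≤ t ∧ φ t z ∈ W := by
    intro p W hW hpW hp s hs
    have hp' : p ∈ closure {w | ∃ t : ℝ, s ≤ t ∧ φ t z = w} :=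
      Set.mem_iInter.1 (Set.mem_iInter.1 hp s) hs
    have hWopen : IsOpen ((fun w => φ 1 w) ⁻¹' W) := hW.preimage hφ1
    obtain ⟨w, hwW, t, hts, htw⟩ := (mem_closure_iff.1 hp') _ hWopen hpW
    have ht0 : (0:ℝ) ≤ t := le_trans hs hts
    refine ⟨t + 1, by linarith, by linarith, ?_⟩
    have he : φ (1 + t) z = φ 1 (φ t z) := hφadd 1 t one_pos.le ht0 z
    rw [add_comm, he, htw]
    exact hwW
  have hA := hvisit x U hU hxU hx
  have hB := hvisit y V hV hyV hy
  obtain ⟨a₂, ha₂1, ha₂0, ha₂U⟩ := hA 1 one_pos.le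
  obtain ⟨b', hb'a, hb'0, hb'V⟩ := hB (a₂ + 1) (by linarith)
  set r' := b' - a₂ with hr'
  have hr'pos : 0 < r' := by rw [hr']; linarith
  obtain ⟨a, haa, ha0, haU⟩ := hA (b' + 1) (by linarith)
  have hAopen : IsOpen ((fun t : ℝ => φ t z) ⁻¹' U) := hU.preimage hcont
  obtain ⟨ε, hεpos, hball⟩ := Metric.isOpen_iff.1 hAopen a haU
  set r₀ := a - b' with hr₀
  have hr₀1 : 1 ≤ r₀ := by rw [hr₀]; linarith
  set δ := min ε 1 with hδ
  have hδpos : 0 < δ := lt_min hεpos one_pos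
  have hδε : δ ≤ ε := min_le_left _ _
  have hδ1 : δ ≤ 1 := min_le_right _ _
  obtain ⟨q, hq1, hq2⟩ := exists_rat_btwn
    (show (r₀ - δ)/r' < r₀/r' from by gcongr <;> linarith)
  have hq0 : (0:ℝ) < (q:ℝ) :=
    lt_of_le_of_lt (div_nonneg (by linarith) hr'pos.le) hq1
  set r := (q:ℝ) * r' with hrdef
  have hrpos : 0 < r := mul_pos hq0 hr'pos
  have hrlt : r < r₀ := by
    rw [hrdef]; exact (lt_div_iff₀ hr'pos).1 hq2
  have hrgt : r₀ - δ < r := by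
    rw [hrdef]; exact (div_lt_iff₀ hr'pos).1 hq1
  set a' := b' + r with ha'
  have ha'U : φ a' z ∈ U := by
    apply hball
    rw [Metric.mem_ball, Real.dist_eq, abs_lt]
    constructor <;> [skip; skip] <;> · rw [ha', hr₀] at *; linarith [hrgt, hrlt]
  have ha'0 : (0:ℝ) ≤ a' := by rw [ha']; linarith
  have hlta' : lt (φ a' z) (φ b' z) := hUV _ ha'U _ hb'V
  have hlta₂ : lt (φ a₂ z) (φ b' z) := hUV _ ha₂U _ hb'V
  -- step lemmas
  have step_dec : ∀ t : ℝ, a' ≤ t → lt (φ t z) (φ (t - r) z) := by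
    intro t ht
    rcases eq_or_lt_of_le ht with rfl | hlt'
    · have e : a' - r = b' := by rw [ha']; ring
      rw [e]; exact hlta'
    · have h := hmono _ _ (hlt_le _ _ hlta') (hlt_ne _ _ hlta') (t - a') (by linarith)
      have e1 : φ (t - a') (φ a' z) = φ t z := by
        rw [← hφadd (t - a') a' (by linarith) ha'0]; congr 1; ring
      have e2 : φ (t - a') (φ b' z) = φ (t - r) z := by
        rw [← hφadd (t - a') b' (by linarith) hb'0]; congr 1; rw [ha']; ring
      rwa [e1, e2] at h
  have step_inc : ∀ t : ℝ, a₂ ≤ t → lt (φ t z) (φ (t + r') z) := by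
    intro t ht
    rcases eq_or_lt_of_le ht with rfl | hlt'
    · have e : a₂ + r' = b' := by rw [hr']; ring
      rw [e]; exact hlta₂
    · have h := hmono _ _ (hlt_le _ _ hlta₂) (hlt_ne _ _ hlta₂) (t - a₂) (by linarith)
      have e1 : φ (t - a₂) (φ a₂ z) = φ t z := by
        rw [← hφadd (t - a₂) a₂ (by linarith) ha₂0]; congr 1; ring
      have e2 : φ (t - a₂) (φ b' z) = φ (t + r') z := by
        rw [← hφadd (t - a₂) b' (by linarith) hb'0]; congr 1; rw [hr']; ring
      rwa [e1, e2] at h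
  -- chains
  have chain_dec : ∀ (k : ℕ) (T : ℝ), a' ≤ T → φ (T + k * r) z ≤ φ T z := by
    intro k
    induction k with
    | zero => intro T hT; simp
    | succ k ih =>
      intro T hT
      have hk : (0:ℝ) ≤ ((k:ℝ) + 1) * r := by positivity
      have h1 := step_dec (T + ((k:ℝ) + 1) * r) (by linarith)
      have e : T + ((k:ℝ) + 1) * r - r = T + (k:ℝ) * r := by ring
      rw [e] at h1
      push_cast
      exact le_trans (hlt_le _ _ h1) (ih T hT)
  have chain_inc : ∀ (k : ℕ) (T : ℝ), a₂ ≤ T → φ T z ≤ φ (T + k * r') z := by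
    intro k
    induction k with
    | zero => intro T hT; simp
    | succ k ih =>
      intro T hT
      have hk : (0:ℝ) ≤ (k:ℝ) * r' := by positivity
      have h1 := step_inc (T + (k:ℝ) * r') (by linarith)
      push_cast
      have e : T + ((k:ℝ) + 1) * r' = T + (k:ℝ) * r' + r' := by ring
      rw [e]
      exact le_trans (ih T hT) (hlt_le _ _ h1)
  -- numerology: n₁ * r = n₂ * r'
  have hqQ : (0:ℚ) < q := by exact_mod_cast hq0
  set n₁ := q.den with hn₁def
  set n₂ := q.num.toNat with hn₂def
  have hn₁ : 1 ≤ n₁ := Nat.one_le_iff_ne_zero.mpr q.den_nz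
  have hn₂cast : ((n₂:ℕ):ℝ) = ((q.num:ℤ):ℝ) := by
    rw [hn₂def]; exact_mod_cast Int.toNat_of_nonneg (Rat.num_pos.2 hqQ).le
  have key : (n₁:ℝ) * r = (n₂:ℝ) * r' := by
    have hqcast : (q:ℝ) = (q.num:ℝ) / (q.den:ℝ) := Rat.cast_def q
    have hd : ((q.den:ℕ):ℝ) ≠ 0 := Nat.cast_ne_zero.2 q.den_nz
    rw [hrdef, hqcast, hn₂cast]
    field_simp
    rfl
  -- finale
  have hTa₂ : a₂ ≤ a' := by rw [ha']; linarith
  have h1 : φ a' z ≤ φ (a' + n₂ * r') z := chain_inc n₂ a' hTa₂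
  have h2 : φ (a' + r + (n₁ - 1 : ℕ) * r) z ≤ φ (a' + r) z :=
    chain_dec (n₁ - 1) (a' + r) (by linarith)
  have hcast : ((n₁ - 1 : ℕ):ℝ) = (n₁:ℝ) - 1 := by
    push_cast [Nat.cast_sub hn₁]; ring
  have e12 : a' + (n₂:ℝ) * r' = a' + r + ((n₁ - 1 : ℕ):ℝ) * r := by
    rw [hcast]; linear_combination -key
  have h3 : lt (φ (a' + r) z) (φ a' z) := by
    have h := step_dec (a' + r) (by linarith)
    simpa using h
  have hge : φ a' z ≤ φ (a' + r) z := by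
    calc φ a' z ≤ φ (a' + n₂ * r') z := h1
      _ = φ (a' + r + ((n₁ - 1 : ℕ):ℝ) * r) z := by rw [e12]
      _ ≤ φ (a' + r) z := h2
  exact hlt_ne _ _ h3 (le_antisymm (hlt_le _ _ h3) hge)
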